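/- An ordered field F satisfies the least upper bound property if and only if Taylor's Theorem with Peano Remainder holds in F: for every n ∈ ℕ and every f : F → F that is n times differentiable at a, lim_{x→a} (f(x) − Σ_{k=0}^{n} f^{(k)}(a)/k! · (x−a)^k)/(x−a)^n = 0. -/

import Mathlib

open Filter Topology

/-- The derivative of `f : F → F` at `a` in the order topology. -/
def HasDerivO {F : Type*} [Field F] [LinearOrder F] [IsStrictOrderedRing F] [TopologicalSpace F]
    (f : F → F) (L a : F) : Prop :=
  Tendsto (fun x => (f x - f a) / (x - a)) (𝓝[≠] a) (𝓝 L)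

/-- `f` is `n` times differentiable at `a` with derivatives recorded in `D`. -/
def HasNDerivAt {F : Type*} [Field F] [LinearOrder F] [IsStrictOrderedRing F] [TopologicalSpace F]
    (n : ℕ) (f : F → F) (D : ℕ → F → F) (a : F) : Prop :=
  D 0 = f ∧
  ∃ U ∈ 𝓝 a, (∀ k, k + 1 < n → ∀ x ∈ U, HasDerivO (D k) (D (k + 1) x) x) ∧
    HasDerivO (D (n - 1)) (D n a) a

section Aux
open Finset
set_option linter.unusedSectionVars false
set_option maxHeartbeats 1000000
variable {F : Type*} [Field F] [LinearOrder F] [IsStrictOrderedRing F] [TopologicalSpace F] [OrderTopology F]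

lemma tendsto_zero_of_abs_le {l : Filter F} {v : F → F}
    (h : ∀ ε > (0:F), ∀ᶠ x in l, |v x| ≤ ε) : Tendsto v l (𝓝 0) := by
  rw [tendsto_order]
  constructor
  · intro b hb
    filter_upwards [h (-b/2) (by linarith)] with x hx
    have := abs_le.1 hx
    linarith [this.1]
  · intro b hb
    filter_upwards [h (b/2) (by linarith)] with x hx
    have := abs_le.1 hx
    linarith [this.2]

lemma abs_le_of_tendsto_zero {l : Filter F} {v : F → F}
    (h : Tendsto v l (𝓝 0)) {ε : F} (hε : 0 < ε) : ∀ᶠ x in l, |v x| ≤ ε := by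
  have h1 := (tendsto_order.1 h).1 (-ε) (by linarith)
  have h2 := (tendsto_order.1 h).2 ε hε
  filter_upwards [h1, h2] with x hx1 hx2
  rw [abs_le]; exact ⟨le_of_lt hx1, le_of_lt hx2⟩

lemma hasDerivO_of_locally_const {f : F → F} {x : F}
    (h : ∀ᶠ y in 𝓝 x, f y = f x) : HasDerivO f 0 x := by
  have : ∀ᶠ y in 𝓝[≠] x, (fun y => (f y - f x)/(y - x)) y = 0 := by
    filter_upwards [eventually_nhdsWithin_of_eventually_nhds h] with y hy
    simp [hy]
  exact Tendsto.congr' (this.mono fun y hy => hy.symm) tendsto_const_nhds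

lemma hasDerivO_sub {f g : F → F} {L M t : F} (hf : HasDerivO f L t) (hg : HasDerivO g M t) :
    HasDerivO (fun x => f x - g x) (L - M) t := by
  have h := Filter.Tendsto.sub hf hg
  refine h.congr fun x => ?_
  rw [div_sub_div_same]
  congr 1
  ring

lemma hasDerivO_monomial (c b t : F) (k : ℕ) :
    HasDerivO (fun x => c * (x - b) ^ k) (c * k * (t - b) ^ (k - 1)) t := by
  have hcont : Tendsto (fun x : F => c * ∑ i ∈ range k, (x - b) ^ i * (t - b) ^ (k - 1 - i))
      (𝓝[≠] t) (𝓝 (c * ∑ i ∈ range k, (t - b) ^ i * (t - b) ^ (k - 1 - i))) := by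
    apply Tendsto.mono_left _ nhdsWithin_le_nhds
    apply Continuous.tendsto
    fun_prop
  have hsum : c * ∑ i ∈ range k, (t - b) ^ i * (t - b) ^ (k - 1 - i) =
      c * k * (t - b) ^ (k - 1) := by
    have he : ∀ i ∈ range k, (t - b) ^ i * (t - b) ^ (k - 1 - i) = (t - b) ^ (k - 1) := by
      intro i hi
      rw [← pow_add]
      congr 1
      have := mem_range.1 hi
      omega
    rw [Finset.sum_congr rfl he, Finset.sum_const, card_range, nsmul_eq_mul, mul_assoc]
  rw [hsum] at hcont
  refine Tendsto.congr' ?_ hcont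
  filter_upwards [self_mem_nhdsWithin] with x (hx : x ≠ t)
  have hxt : x - t ≠ 0 := sub_ne_zero.2 hx
  have hg := geom_sum₂_mul (x - b) (t - b) k
  have h2 : (x - b) - (t - b) = x - t := by ring
  rw [h2] at hg
  show c * _ = _
  rw [eq_div_iff hxt]
  linear_combination c * hg

lemma hasDerivO_poly (c : ℕ → F) (b t : F) (m : ℕ) :
    HasDerivO (fun x => ∑ k ∈ range m, c k * (x - b) ^ k)
      (∑ k ∈ range m, c k * k * (t - b) ^ (k - 1)) t := by
  induction m with
  | zero => simpa using hasDerivO_of_locally_const (f := fun _ => (0:F)) (by simp)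
  | succ m ih =>
    have h := Filter.Tendsto.add ih (hasDerivO_monomial (c m) b t m)
    simp only [HasDerivO, Finset.sum_range_succ]
    refine h.congr fun x => ?_
    rw [← add_div]
    congr 1
    ring


/-- From a derivative value, get an interval where slopes are > L - ε. -/
lemma slope_gt_near {h : F → F} {d σ ε : F} (hd : HasDerivO h d σ) (hε : 0 < ε) :
    ∃ l u : F, l < σ ∧ σ < u ∧ ∀ x ∈ Set.Ioo l u, x ≠ σ → d - ε < (h x - h σ) / (x - σ) := by
  have hev : ∀ᶠ x in 𝓝[≠] σ, d - ε < (h x - h σ) / (x - σ) :=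
    hd (Ioi_mem_nhds (by linarith))
  rw [eventually_nhdsWithin_iff] at hev
  rcases mem_nhds_iff_exists_Ioo_subset.1 hev with ⟨l, u, hmem, hsub⟩
  exact ⟨l, u, hmem.1, hmem.2, fun x hx hne => hsub hx hne⟩

lemma mono_of_deriv_nonneg (hlub : ∀ A : Set F, A.Nonempty → BddAbove A → ∃ s, IsLUB A s)
    {h : F → F} {d : F → F} {s t : F} (hst : s ≤ t)
    (hder : ∀ u ∈ Set.Icc s t, HasDerivO h (d u) u)
    (hpos : ∀ u ∈ Set.Icc s t, 0 ≤ d u) : h s ≤ h t := by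
  rcases eq_or_lt_of_le hst with rfl | hlt
  · exact le_refl _
  have key : ∀ ε > (0:F), h s - ε * (t - s) ≤ h t := by
    intro ε hε
    set S : Set F := {u | u ∈ Set.Icc s t ∧ h s - ε * (u - s) ≤ h u} with hS
    have hsS : s ∈ S := ⟨⟨le_refl _, hst⟩, by simp⟩
    have hbdd : BddAbove S := ⟨t, fun u hu => hu.1.2⟩
    obtain ⟨σ, hσ⟩ := hlub S ⟨s, hsS⟩ hbdd
    have hσs : s ≤ σ := hσ.1 hsS
    have hσt : σ ≤ t := hσ.2 fun u hu => hu.1.2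
    have hσmem : σ ∈ Set.Icc s t := ⟨hσs, hσt⟩
    obtain ⟨l, u, hlσ, hσu, hslope⟩ := slope_gt_near (hder σ hσmem) hε
    have claim1 : h s - ε * (σ - s) ≤ h σ := by
      by_cases hσS : σ ∈ S
      · exact hσS.2
      · have hnub : ¬(l ∈ upperBounds S) := fun hub => absurd (hσ.2 hub) (not_le.2 hlσ)
        obtain ⟨w, hwS, hlw⟩ : ∃ w ∈ S, l < w := by
          by_contra hc
          push_neg at hc
          exact hnub fun w hw => hc w hw
        have hwσ : w ≤ σ := hσ.1 hwS
        have hwne : w ≠ σ := fun he => hσS (he ▸ hwS)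
        have hwlt : w < σ := lt_of_le_of_ne hwσ hwne
        have hw2 := hslope w ⟨hlw, hwlt.trans hσu⟩ hwne
        have hneg : w - σ < 0 := by linarith
        rw [lt_div_iff_of_neg hneg] at hw2
        have hdσ := hpos σ hσmem
        have h1 : 0 ≤ d σ * (σ - w) := mul_nonneg hdσ (by linarith)
        have hw3 := hwS.2
        nlinarith
    have claim2 : σ = t := by
      by_contra hne
      have hσlt : σ < t := lt_of_le_of_ne hσt hne
      set w := min ((σ + u)/2) t with hw
      have hσw : σ < w := lt_min (by linarith) hσlt
      have hwu : w < u := lt_of_le_of_lt (min_le_left _ _) (by linarith)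
      have hwt : w ≤ t := min_le_right _ _
      have hw2 := hslope w ⟨hlσ.trans hσw, hwu⟩ (ne_of_gt hσw)
      have hposub : (0:F) < w - σ := by linarith
      rw [lt_div_iff₀ hposub] at hw2
      have h1 : 0 ≤ d σ * (w - σ) := mul_nonneg (hpos σ hσmem) (by linarith)
      have hwS : w ∈ S := ⟨⟨hσs.trans hσw.le, hwt⟩, by nlinarith⟩
      exact absurd (hσ.1 hwS) (not_le.2 hσw)
    rw [claim2] at claim1
    exact claim1
  by_contra hc
  push_neg at hc
  have hεpos : (0:F) < (h s - h t) / (2 * (t - s)) := by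
    apply div_pos (by linarith) (by linarith)
  have := key _ hεpos
  have hts : (t - s) ≠ 0 := by linarith
  rw [div_mul_eq_mul_div, show (h s - h t) * (t - s) / (2 * (t - s)) = (h s - h t)/2 by
    field_simp] at this
  linarith

lemma hasDerivO_neg {f : F → F} {L t : F} (hf : HasDerivO f L t) :
    HasDerivO (fun x => -f x) (-L) t := by
  have h2 := Filter.Tendsto.neg hf
  refine h2.congr fun x => ?_
  rw [← neg_div]
  congr 1
  ring

lemma hasDerivO_linear (M t : F) : HasDerivO (fun u => M * u) M t := by
  have hev : ∀ᶠ x in 𝓝[≠] t, (fun _ => M) x = (fun x => (M*x - M*t)/(x - t)) x := by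
    filter_upwards [self_mem_nhdsWithin] with x (hx : x ≠ t)
    have hxt : x - t ≠ 0 := sub_ne_zero.2 hx
    field_simp
  exact Tendsto.congr' hev tendsto_const_nhds

lemma abs_le_of_derivO_bound (hlub : ∀ A : Set F, A.Nonempty → BddAbove A → ∃ s, IsLUB A s)
    {h d : F → F} {s t M : F} (hst : s ≤ t)
    (hder : ∀ u ∈ Set.Icc s t, HasDerivO h (d u) u)
    (hbd : ∀ u ∈ Set.Icc s t, |d u| ≤ M) : |h t - h s| ≤ M * (t - s) := by
  have h1 := mono_of_deriv_nonneg hlub (h := fun u => M * u - h u) (d := fun u => M - d u) hst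
    (fun u hu => hasDerivO_sub (hasDerivO_linear M u) (hder u hu))
    (fun u hu => by have := (abs_le.1 (hbd u hu)).2; linarith)
  have h2 := mono_of_deriv_nonneg hlub (h := fun u => M * u - (-h u)) (d := fun u => M - -(d u)) hst
    (fun u hu => hasDerivO_sub (hasDerivO_linear M u) (hasDerivO_neg (hder u hu)))
    (fun u hu => by have := (abs_le.1 (hbd u hu)).1; linarith)
  rw [abs_le]
  constructor <;> nlinarith

lemma fac_ne_zero (k : ℕ) : ((Nat.factorial k : ℕ) : F) ≠ 0 :=
  Nat.cast_ne_zero.2 (Nat.factorial_ne_zero k)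

lemma peano (hlub : ∀ A : Set F, A.Nonempty → BddAbove A → ∃ s, IsLUB A s) :
    ∀ n : ℕ, 1 ≤ n → ∀ (f : F → F) (D : ℕ → F → F) (a : F), HasNDerivAt n f D a →
      Tendsto
        (fun x => (f x - ∑ k ∈ Finset.range (n + 1),
          D k a / (Nat.factorial k : F) * (x - a) ^ k) / (x - a) ^ n)
        (𝓝[≠] a) (𝓝 0) := by
  intro n hn
  induction n, hn using Nat.le_induction with
  | base =>
    intro f D a hD
    obtain ⟨hD0, U, hU, hchain, hlast⟩ := hD
    rw [hD0] at hlast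
    have hT : Tendsto (fun x => (f x - f a)/(x - a) - D 1 a) (𝓝[≠] a) (𝓝 0) := by
      simpa using Filter.Tendsto.sub_const hlast (D 1 a)
    refine Tendsto.congr' ?_ hT
    filter_upwards [self_mem_nhdsWithin] with x (hx : x ≠ a)
    have hxa : x - a ≠ 0 := sub_ne_zero.2 hx
    rw [Finset.sum_range_succ, Finset.sum_range_one]
    simp only [Nat.factorial_zero, Nat.factorial_one, Nat.cast_one, pow_zero, pow_one]
    rw [hD0]
    field_simp
    ring
  | succ n hn IH =>
    intro f D a hD
    obtain ⟨hD0, U, hU, hchain, hlast⟩ := hD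
    have hzn : 0 < n := hn
    have hHD' : HasNDerivAt n (D 1) (fun k => D (k+1)) a := by
      refine ⟨rfl, U, hU, ?_, ?_⟩
      · intro k hk x hx
        exact hchain (k+1) (by omega) x hx
      · show HasDerivO (D (n - 1 + 1)) (D (n + 1) a) a
        have he : n - 1 + 1 = n := by omega
        rw [he]
        exact hlast
    have IH' : Tendsto (fun x => (D 1 x - ∑ k ∈ Finset.range (n + 1),
        D (k+1) a / (Nat.factorial k : F) * (x - a) ^ k) / (x - a) ^ n)
        (𝓝[≠] a) (𝓝 0) := IH (D 1) (fun k => D (k+1)) a hHD'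
    -- key facts
    have hQa : (∑ k ∈ Finset.range (n + 1),
        D (k+1) a / (Nat.factorial k : F) * (a - a) ^ k) = D 1 a := by
      rw [Finset.sum_eq_single 0]
      · simp
      · intro b _ hb
        rw [sub_self, zero_pow hb, mul_zero]
      · intro hb
        simp at hb
    have hRa : f a - (∑ k ∈ Finset.range (n + 1 + 1),
        D k a / (Nat.factorial k : F) * (a - a) ^ k) = 0 := by
      rw [Finset.sum_eq_single 0]
      · simp [hD0]
      · intro b _ hb
        rw [sub_self, zero_pow hb, mul_zero]
      · intro hb
        simp at hb
    have hRder : ∀ t ∈ U, HasDerivO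
        (fun x => f x - ∑ k ∈ Finset.range (n + 1 + 1),
          D k a / (Nat.factorial k : F) * (x - a) ^ k)
        (D 1 t - ∑ k ∈ Finset.range (n + 1),
          D (k+1) a / (Nat.factorial k : F) * (t - a) ^ k) t := by
      intro t ht
      have hf : HasDerivO f (D 1 t) t := by
        have := hchain 0 (by omega) t ht
        rwa [hD0] at this
      have hpol := hasDerivO_poly (fun k => D k a / (Nat.factorial k : F)) a t (n + 1 + 1)
      have hsum : (∑ k ∈ Finset.range (n + 1 + 1),
          D k a / (Nat.factorial k : F) * (k : F) * (t - a) ^ (k - 1)) =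
          ∑ k ∈ Finset.range (n + 1),
          D (k+1) a / (Nat.factorial k : F) * (t - a) ^ k := by
        rw [Finset.sum_range_succ']
        simp only [Nat.cast_zero, mul_zero, zero_mul, add_zero]
        refine Finset.sum_congr rfl fun k _ => ?_
        rw [Nat.factorial_succ]
        have h1 : ((k+1 : ℕ) : F) ≠ 0 := Nat.cast_ne_zero.2 (Nat.succ_ne_zero k)
        have h2 : ((Nat.factorial k : ℕ) : F) ≠ 0 := fac_ne_zero k
        push_cast
        field_simp
      rw [← hsum]
      exact hasDerivO_sub hf hpol
    -- main estimate
    apply tendsto_zero_of_abs_le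
    intro ε hε
    have hE0 := abs_le_of_tendsto_zero IH' hε
    have hE : ∀ᶠ x in 𝓝 a, x ≠ a → |D 1 x - ∑ k ∈ Finset.range (n + 1),
        D (k+1) a / (Nat.factorial k : F) * (x - a) ^ k| ≤ ε * |x - a| ^ n := by
      rw [eventually_nhdsWithin_iff] at hE0
      filter_upwards [hE0] with x hx hne
      have hb := hx hne
      have hxa : x - a ≠ 0 := sub_ne_zero.2 hne
      have hpow : (0:F) < |x - a| ^ n := pow_pos (abs_pos.2 hxa) n
      rw [abs_div, abs_pow, div_le_iff₀ hpow] at hb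
      linarith [hb]
    obtain ⟨l, u, hmem, hsub⟩ := mem_nhds_iff_exists_Ioo_subset.1 (Filter.inter_mem hU hE)
    have key : ∀ x ∈ Set.Ioo l u, |f x - ∑ k ∈ Finset.range (n + 1 + 1),
        D k a / (Nat.factorial k : F) * (x - a) ^ k| ≤ ε * |x - a| ^ (n + 1) := by
      intro x hx
      have hbd : ∀ (y z : F), y ≤ z → Set.Icc y z ⊆ Set.Ioo l u → a ∈ Set.Icc y z →
          ∀ w ∈ Set.Icc y z, |D 1 w - ∑ k ∈ Finset.range (n + 1),
            D (k+1) a / (Nat.factorial k : F) * (w - a) ^ k| ≤ ε * (z - y) ^ n := by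
        intro y z hyz hsub2 ha w hw
        rcases eq_or_ne w a with rfl | hne
        · rw [hQa, sub_self, abs_zero]
          exact mul_nonneg hε.le (pow_nonneg (by linarith) n)
        · have hb := (hsub (hsub2 hw)).2 hne
          refine hb.trans ?_
          have h1 : |w - a| ≤ z - y := by
            rw [abs_le]
            constructor <;>
            · have := hw.1; have := hw.2; have := ha.1; have := ha.2; linarith
          exact mul_le_mul_of_nonneg_left (pow_le_pow_left₀ (abs_nonneg _) h1 n) hε.le
      rcases lt_trichotomy x a with hlt | rfl | hgt
      · -- x < a : interval [x, a]
        have hIcc : Set.Icc x a ⊆ Set.Ioo l u := fun w hw =>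
          ⟨lt_of_lt_of_le hx.1 hw.1, lt_of_le_of_lt hw.2 hmem.2⟩
        have hB := abs_le_of_derivO_bound hlub (M := ε * (a - x) ^ n) hlt.le
          (fun w hw => hRder w (hsub (hIcc hw)).1)
          (fun w hw => by
            have := hbd x a hlt.le hIcc ⟨hlt.le, le_refl a⟩ w hw
            simpa using this)
        rw [hRa, zero_sub, abs_neg] at hB
        have hax : |x - a| = a - x := by rw [abs_sub_comm, abs_of_pos (by linarith)]
        rw [hax, pow_succ]
        calc |f x - _| ≤ ε * (a - x) ^ n * (a - x) := hB
        _ = ε * ((a - x) ^ n * (a - x)) := by ring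
      · rw [hRa, abs_zero]
        positivity
      · -- a < x : interval [a, x]
        have hIcc : Set.Icc a x ⊆ Set.Ioo l u := fun w hw =>
          ⟨lt_of_lt_of_le hmem.1 hw.1, lt_of_le_of_lt hw.2 hx.2⟩
        have hB := abs_le_of_derivO_bound hlub (M := ε * (x - a) ^ n) hgt.le
          (fun w hw => hRder w (hsub (hIcc hw)).1)
          (fun w hw => by
            have := hbd a x hgt.le hIcc ⟨le_refl a, hgt.le⟩ w hw
            simpa using this)
        rw [hRa, sub_zero] at hB
        have hax : |x - a| = x - a := abs_of_pos (by linarith)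
        rw [hax, pow_succ]
        calc |f x - _| ≤ ε * (x - a) ^ n * (x - a) := hB
        _ = ε * ((x - a) ^ n * (x - a)) := by ring
    have hIoo : Set.Ioo l u ∈ 𝓝 a := Ioo_mem_nhds hmem.1 hmem.2
    filter_upwards [eventually_nhdsWithin_of_eventually_nhds hIoo, self_mem_nhdsWithin]
      with x hx (hne : x ≠ a)
    have hxa : x - a ≠ 0 := sub_ne_zero.2 hne
    have hpow : (0:F) < |x - a| ^ (n+1) := pow_pos (abs_pos.2 hxa) _
    rw [abs_div, abs_pow, div_le_iff₀ hpow]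
    exact key x hx

set_option maxHeartbeats 1000000

lemma taylor_fails (f : F → F) (hf0 : f 0 = 0)
    (hder : ∀ x, HasDerivO f 0 x)
    (hbig : ∀ η > (0:F), ∃ x, 0 < x ∧ x < η ∧ f x = x ^ 2)
    (hT : ∀ n : ℕ, 1 ≤ n → ∀ (g : F → F) (D : ℕ → F → F) (a : F), HasNDerivAt n g D a →
      Tendsto (fun x => (g x - ∑ k ∈ Finset.range (n + 1),
          D k a / (Nat.factorial k : F) * (x - a) ^ k) / (x - a) ^ n) (𝓝[≠] a) (𝓝 0)) :
    False := by
  set D : ℕ → F → F := fun k => if k = 0 then f else (fun _ => 0) with hD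
  have hzero : HasDerivO (fun _ : F => (0:F)) 0 0 :=
    hasDerivO_of_locally_const (Filter.Eventually.of_forall fun _ => rfl)
  have hnd : HasNDerivAt 2 f D 0 := by
    refine ⟨by simp [hD], Set.univ, univ_mem, ?_, ?_⟩
    · intro k hk x _
      have hk0 : k = 0 := by omega
      subst hk0
      simp only [hD, if_pos rfl, if_neg (one_ne_zero)]
      exact hder x
    · show HasDerivO (D 1) (D 2 0) 0
      simp only [hD, if_neg (one_ne_zero), if_neg (two_ne_zero)]
      exact hzero
  have htend := hT 2 (by norm_num) f D 0 hnd
  have heq : ∀ x : F, (f x - ∑ k ∈ Finset.range (2 + 1),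
      D k 0 / (Nat.factorial k : F) * (x - 0) ^ k) / (x - 0) ^ 2 = f x / x ^ 2 := by
    intro x
    rw [Finset.sum_range_succ, Finset.sum_range_succ, Finset.sum_range_one]
    simp [hD, hf0]
  rw [funext heq] at htend
  have hev := (tendsto_order.1 htend).2 1 one_pos
  rw [eventually_nhdsWithin_iff] at hev
  obtain ⟨l, u, hmem, hsub⟩ := mem_nhds_iff_exists_Ioo_subset.1 hev
  obtain ⟨x, hx0, hxu, hfx⟩ := hbig u hmem.2
  have hlt : f x / x ^ 2 < 1 := hsub ⟨lt_trans hmem.1 hx0, hxu⟩ (ne_of_gt hx0)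
  rw [hfx, div_self (pow_ne_zero _ (ne_of_gt hx0))] at hlt
  exact lt_irrefl 1 hlt

lemma exists_bad_nonarch (hna : ¬ Archimedean F) :
    ∃ f : F → F, f 0 = 0 ∧ (∀ x, HasDerivO f 0 x) ∧
      ∀ η > (0:F), ∃ x, 0 < x ∧ x < η ∧ f x = x ^ 2 := by
  -- get an infinitesimal t
  obtain ⟨t, ht0, ht1⟩ : ∃ t : F, 0 < t ∧ ∀ n : ℕ, (n : F) * t < 1 := by
    rw [archimedean_iff_nat_lt] at hna
    push_neg at hna
    obtain ⟨x, hx⟩ := hna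
    have hx0 : (0:F) < x := by have := hx 1; push_cast at this; linarith
    refine ⟨(x+1)⁻¹, inv_pos.2 (by linarith), fun n => ?_⟩
    have := hx n
    rw [← div_eq_mul_inv, div_lt_one (by linarith)]
    linarith
  -- galaxy equivalence relation
  set R : F → F → Prop := fun x y => ∃ m : ℕ, x ≤ m * y ∧ y ≤ m * x with hRdef
  have hRrefl : ∀ x, R x x := fun x => ⟨1, by norm_num, by norm_num⟩
  have hRsymm : ∀ {x y}, R x y → R y x := fun ⟨m, h1, h2⟩ => ⟨m, h2, h1⟩
  have hRtrans : ∀ {x y z}, R x y → R y z → R x z := by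
    rintro x y z ⟨m, h1, h2⟩ ⟨k, h3, h4⟩
    refine ⟨m * k, ?_, ?_⟩
    · calc x ≤ m * y := h1
      _ ≤ m * (k * z) := by
          have : (0:F) ≤ m := Nat.cast_nonneg m
          nlinarith
      _ = (m*k:ℕ) * z := by push_cast; ring
    · calc z ≤ k * y := h4
      _ ≤ k * (m * x) := by
          have : (0:F) ≤ k := Nat.cast_nonneg k
          nlinarith
      _ = (m*k:ℕ) * x := by push_cast; ring
  set S : Setoid F := ⟨R, hRrefl, @hRsymm, @hRtrans⟩ with hSdef
  set r : F → F := fun x => (Quotient.mk S x).out with hrdef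
  have hrrel : ∀ x, R (r x) x := fun x => Quotient.exact (Quotient.out_eq (Quotient.mk S x))
  have hrcongr : ∀ {x y}, R x y → r x = r y := by
    intro x y h
    simp only [hrdef]
    rw [Quotient.sound (a := x) (b := y) h]
  have hRpos : ∀ {x y}, R x y → 0 < x → 0 < y := by
    rintro x y ⟨m, h1, h2⟩ hx
    by_contra hy
    push_neg at hy
    have hm : (0:F) ≤ m := Nat.cast_nonneg m
    nlinarith
  set f : F → F := fun x => if 0 < x then (r x)^2 else 0 with hfdef
  have hf0 : f 0 = 0 := by simp [hfdef]
  have hfx : ∀ x, 0 < x → f x = (r x)^2 := fun x hx => by simp [hfdef, if_pos hx]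
  refine ⟨f, hf0, ?_, ?_⟩
  · -- derivative 0 everywhere
    intro x
    rcases lt_trichotomy x 0 with hx | hx | hx
    · apply hasDerivO_of_locally_const
      have hIio : Set.Iio (0:F) ∈ 𝓝 x := (isOpen_Iio).mem_nhds hx
      filter_upwards [hIio] with y (hy : y < 0)
      simp [hfdef, not_lt.2 hy.le, not_lt.2 hx.le]
    · -- x = 0 : squeeze
      subst hx
      apply tendsto_zero_of_abs_le
      intro ε hε
      have hrad : (0:F) < ε * t^2 := by positivity
      have hIoo : Set.Ioo (-(ε*t^2)) (ε*t^2) ∈ 𝓝 (0:F) := Ioo_mem_nhds (by linarith) hrad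
      filter_upwards [eventually_nhdsWithin_of_eventually_nhds hIoo, self_mem_nhdsWithin]
        with y hy (hne : y ≠ 0)
      rcases lt_or_gt_of_ne hne with hy0 | hy0
      · rw [hf0, sub_zero, sub_zero]
        simp [hfdef, not_lt.2 hy0.le, hε.le]
      · rw [hf0, sub_zero, sub_zero, hfx y hy0]
        obtain ⟨m, h1, h2⟩ := hrrel y
        have hrpos : 0 < r y := hRpos (hRsymm (hrrel y)) hy0
        have hm1 : 1 ≤ m := by
          rcases Nat.eq_zero_or_pos m with rfl | h
          · exfalso; simp at h1; nlinarith
          · exact h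
        have hmt : ((m:F)*(m:F)) * t < 1 := by
          have := ht1 (m*m)
          push_cast at this
          linarith
        have htlt1 : t < 1 := by have := ht1 1; simpa using this
        have hyb : y < ε * t^2 := hy.2
        -- r y ≤ m y < m ε t², so m (r y) < m² ε t² ≤ ε t < ε, hence (r y)² ≤ (m y) (r y) = y (m r y) < y ε
        have hm0 : (0:F) < m := by exact_mod_cast hm1
        have s2 : (m:F) * r y < (m:F)*(m:F)*(ε*t^2) := by
          calc (m:F) * r y ≤ (m:F) * ((m:F) * y) := mul_le_mul_of_nonneg_left h1 hm0.le
          _ = (m:F)*(m:F)*y := by ring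
          _ < (m:F)*(m:F)*(ε*t^2) := mul_lt_mul_of_pos_left hyb (mul_pos hm0 hm0)
        have s3 : (m:F)*(m:F)*(ε*t^2) ≤ ε * t :=  by
          nlinarith [mul_nonneg (mul_nonneg hε.le ht0.le) (sub_nonneg.2 hmt.le)]
        have s4 : (m:F) * r y < ε := by nlinarith
        have key : (r y)^2 < ε * y := by
          nlinarith [mul_le_mul_of_nonneg_left h1 hrpos.le, mul_lt_mul_of_pos_left s4 hy0]
        rw [abs_div, abs_of_pos hy0, abs_of_pos (by positivity : (0:F) < (r y)^2)]
        rw [div_le_iff₀ hy0]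
        nlinarith
    · -- x > 0 : locally constant on Ioo (x/2) (2x)
      apply hasDerivO_of_locally_const
      have hIoo : Set.Ioo (x/2) (2*x) ∈ 𝓝 x := Ioo_mem_nhds (by linarith) (by linarith)
      filter_upwards [hIoo] with y hy
      have hy0 : 0 < y := lt_trans (by linarith) hy.1
      have hRyx : R y x := ⟨2, by push_cast; linarith [hy.2], by push_cast; linarith [hy.1]⟩
      rw [hfx y hy0, hfx x hx, hrcongr hRyx]
  · -- big values
    intro η hη
    have hpos : 0 < η * t := by positivity
    set x := r (η * t) with hxdef
    have hrel := hrrel (η * t)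
    have hrel2 := hrrel (η * t)
    have hx0 : 0 < x := hRpos (hRsymm hrel) hpos
    obtain ⟨m, h1, h2⟩ := hrel
    have hmt := ht1 m
    refine ⟨x, hx0, ?_, ?_⟩
    · calc x ≤ m * (η * t) := h1
      _ = ((m:F) * t) * η := by ring
      _ < 1 * η := by
          apply mul_lt_mul_of_pos_right hmt hη
      _ = η := one_mul η
    · rw [hfx x hx0, hxdef, ← hrcongr (hRsymm hrel2)]

lemma exists_bad_arch (harch : Archimedean F) {A : Set F} (hA : A.Nonempty) (hbdd : BddAbove A)
    (hno : ∀ s : F, ¬ IsLUB A s) :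
    ∃ f : F → F, f 0 = 0 ∧ (∀ x, HasDerivO f 0 x) ∧
      ∀ η > (0:F), ∃ x, 0 < x ∧ x < η ∧ f x = x ^ 2 := by
  classical
  obtain ⟨a₀, ha₀⟩ := hA
  obtain ⟨b, hb⟩ := hbdd
  set l₀ : F := a₀ - 1 with hl₀
  set P : F → Prop := fun q => ∃ a ∈ A, q + l₀ < a with hPdef
  have hP0 : P 0 := ⟨a₀, ha₀, by rw [hl₀]; linarith⟩
  have hPdown : ∀ {y z : F}, y ≤ z → P z → P y := by
    rintro y z hyz ⟨a, ha, hlt⟩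
    exact ⟨a, ha, by linarith⟩
  have hPub : ∀ {q : F}, ¬ P q → (q + l₀) ∈ upperBounds A := by
    intro q hq a ha
    by_contra hc
    exact hq ⟨a, ha, not_le.1 hc⟩
  set β : F := b - l₀ with hβ
  have hPβ : ∀ {y : F}, P y → y < β := by
    rintro y ⟨a, ha, hlt⟩
    have := hb ha
    rw [hβ]; linarith
  have hβpos : 0 < β := by
    rcases hP0 with ⟨a, ha, hlt⟩
    have := hb ha
    rw [hβ]; linarith
  have hPnomax : ∀ {y : F}, P y → ∃ z, P z ∧ y < z := by
    rintro y ⟨a, ha, hlt⟩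
    refine ⟨y + (a - (y + l₀))/2, ⟨a, ha, by linarith⟩, by linarith⟩
  have hnegP : ∀ {z : F}, ¬ P z → ∃ w, ¬ P w ∧ w < z := by
    intro z hz
    have hub := hPub hz
    have := hno (z + l₀)
    rw [IsLUB, IsLeast] at this
    push_neg at this
    have h2 : ¬ ∀ v ∈ upperBounds A, z + l₀ ≤ v := this hub
    push_neg at h2
    obtain ⟨v, hv, hlt⟩ := h2
    refine ⟨v - l₀, ?_, by linarith⟩
    rintro ⟨a, ha, hlt2⟩
    have := hv ha
    linarith
  have hPne : ∀ {y z : F}, P y → ¬P z → y < z := by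
    rintro y z ⟨a, ha, hlt⟩ hz
    have := hPub hz ha
    linarith
  have hnegPpos : ∀ {z : F}, ¬P z → 0 < z := fun hz => hPne hP0 hz
  -- staircase points exist
  have EX : ∀ n : ℕ, 1 ≤ n → ∃ ξ : F, P ((n:F)*ξ) ∧ ¬P (((n:F)+1)*ξ) := by
    intro n hn
    by_contra hc
    push_neg at hc
    obtain ⟨z0, hz0, hy0lt⟩ := hPnomax hP0
    have hy₀pos : 0 < z0 := hy0lt
    have hncast : (0:F) < n := by exact_mod_cast hn
    have hiter : ∀ k : ℕ, P (z0 * (((n:F)+1)/n)^k) := by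
      intro k
      induction k with
      | zero => simpa using hz0
      | succ k ih =>
        have harg : (n:F) * (z0 * (((n:F)+1)/n)^k / n) = z0 * (((n:F)+1)/n)^k := by
          field_simp
        have h1 := hc (z0 * (((n:F)+1)/n)^k / n) (by rw [harg]; exact ih)
        have harg2 : ((n:F)+1) * (z0 * (((n:F)+1)/n)^k / n) = z0 * (((n:F)+1)/n)^(k+1) := by
          rw [pow_succ]
          field_simp
        rwa [harg2] at h1
    obtain ⟨m, hm⟩ := harch.arch β hy₀pos
    rw [nsmul_eq_mul] at hm
    have hbern : (1:F) + (m*n : ℕ) * (1/n) ≤ (1 + 1/n)^(m*n) := by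
      apply one_add_mul_le_pow
      have : (0:F) ≤ 1/n := by positivity
      linarith
    have hq : ((n:F)+1)/n = 1 + 1/n := by field_simp
    have hk := hPβ (hiter (m*n))
    rw [hq] at hk
    have hcast : ((m*n : ℕ):F) * (1/n) = m := by push_cast; field_simp
    rw [hcast] at hbern
    have h2 : z0 * (1 + (m:F)) ≤ z0 * (1 + 1/(n:F))^(m*n) :=
      mul_le_mul_of_nonneg_left hbern hy₀pos.le
    nlinarith
  set ξ : ℕ → F := fun n => if h : 1 ≤ n then (EX n h).choose else 0 with hξdef
  have hξ : ∀ n : ℕ, 1 ≤ n → P ((n:F) * ξ n) ∧ ¬P (((n:F)+1) * ξ n) := by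
    intro n h
    rw [hξdef]
    simp only [dif_pos h]
    exact (EX n h).choose_spec
  have hξpos : ∀ n, 1 ≤ n → 0 < ξ n := by
    intro n h
    have h2 := hnegPpos (hξ n h).2
    have hn1 : (0:F) < (n:F) + 1 := by positivity
    nlinarith
  set cond : F → Prop := fun x => ∃ n : ℕ, 1 ≤ n ∧ P ((n:F)*x) ∧ ¬P (((n:F)+1)*x) with hconddef
  have hxpos : ∀ {x : F} {n : ℕ}, ¬P (((n:F)+1)*x) → 0 < x := by
    intro x n h
    have h2 := hnegPpos h
    have hn1 : (0:F) < (n:F) + 1 := by positivity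
    nlinarith
  have hkey : ∀ {x : F} {m n : ℕ}, m < n → P ((n:F)*x) → ¬P (((m:F)+1)*x) → False := by
    intro x m n hmn hPn hPm
    have hx0 : 0 < x := hxpos hPm
    have hle : ((m:F)+1) ≤ (n:F) := by exact_mod_cast hmn
    have : ((m:F)+1)*x ≤ (n:F)*x := mul_le_mul_of_nonneg_right hle hx0.le
    exact hPm (hPdown this hPn)
  have huniq : ∀ {x : F} {m n : ℕ}, P ((m:F)*x) → ¬P (((m:F)+1)*x) →
      P ((n:F)*x) → ¬P (((n:F)+1)*x) → m = n := by
    intro x m n h1 h2 h3 h4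
    rcases Nat.lt_trichotomy m n with h | h | h
    · exact absurd (hkey h h3 h2) (fun h => h)
    · exact h
    · exact absurd (hkey h h1 h4) (fun h => h)
  set f : F → F := fun x => if h : cond x then (ξ h.choose)^2 else 0 with hfdef
  have hfval : ∀ x (n : ℕ), 1 ≤ n → P ((n:F)*x) → ¬P (((n:F)+1)*x) → f x = (ξ n)^2 := by
    intro x n hn hp hnp
    have hc : cond x := ⟨n, hn, hp, hnp⟩
    rw [hfdef]
    simp only [dif_pos hc]
    obtain ⟨h1, h2, h3⟩ := hc.choose_spec
    rw [huniq h2 h3 hp hnp]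
  have hf0 : f 0 = 0 := by
    rw [hfdef]
    have : ¬ cond 0 := by
      rintro ⟨n, h1, h2, h3⟩
      rw [mul_zero] at h3
      exact h3 hP0
    simp only [dif_neg this]
  have hfzero : ∀ x, ¬ cond x → f x = 0 := by
    intro x hx
    rw [hfdef]
    simp only [dif_neg hx]
  have hbound : ∀ x, 0 ≤ f x ∧ f x ≤ 4*x^2 := by
    intro x
    by_cases hc : cond x
    · obtain ⟨h1, h2, h3⟩ := hc.choose_spec
      set N := hc.choose with hN
      have hx0 : 0 < x := hxpos h3
      have hfv : f x = (ξ N)^2 := hfval x N h1 h2 h3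
      have hξN := hξ N h1
      have hξp := hξpos N h1
      have hNc : (1:F) ≤ (N:F) := by exact_mod_cast h1
      -- N ξN < (N+1) x
      have hlt : (N:F) * ξ N < ((N:F)+1) * x := by
        by_contra hle
        push_neg at hle
        exact h3 (hPdown hle hξN.1)
      have hξ2x : ξ N < 2*x := by nlinarith
      constructor
      · rw [hfv]; positivity
      · rw [hfv]; nlinarith
    · rw [hfzero x hc]
      exact ⟨le_refl 0, by positivity⟩
  refine ⟨f, hf0, ?_, ?_⟩
  · intro x
    rcases lt_trichotomy x 0 with hx | hx | hx
    · apply hasDerivO_of_locally_const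
      have hIio : Set.Iio (0:F) ∈ 𝓝 x := (isOpen_Iio).mem_nhds hx
      filter_upwards [hIio] with y (hy : y < 0)
      have hny : ¬ cond y := by
        rintro ⟨n, h1, h2, h3⟩
        have : ((n:F)+1)*y ≤ 0 := by
          have : (0:F) < (n:F)+1 := by positivity
          nlinarith
        exact h3 (hPdown this hP0)
      have hnx : ¬ cond x := by
        rintro ⟨n, h1, h2, h3⟩
        have : ((n:F)+1)*x ≤ 0 := by
          have : (0:F) < (n:F)+1 := by positivity
          nlinarith
        exact h3 (hPdown this hP0)
      rw [hfzero y hny, hfzero x hnx]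
    · subst hx
      apply tendsto_zero_of_abs_le
      intro ε hε
      have hIoo : Set.Ioo (-(ε/4)) (ε/4) ∈ 𝓝 (0:F) := Ioo_mem_nhds (by linarith) (by linarith)
      filter_upwards [eventually_nhdsWithin_of_eventually_nhds hIoo, self_mem_nhdsWithin]
        with y hy (hne : y ≠ 0)
      rw [hf0, sub_zero, sub_zero, abs_div, div_le_iff₀ (abs_pos.2 hne)]
      have hb := hbound y
      have habs : |f y| = f y := abs_of_nonneg hb.1
      rw [habs]
      have h1 : |y| < ε/4 := abs_lt.2 ⟨hy.1, hy.2⟩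
      nlinarith [sq_abs y, abs_nonneg y, hb.2]
    · by_cases hc : cond x
      · obtain ⟨h1, h2, h3⟩ := hc.choose_spec
        set N := hc.choose with hN
        have hNc : (1:F) ≤ (N:F) := by exact_mod_cast h1
        have hN0 : (0:F) < (N:F) := by linarith
        have hN10 : (0:F) < (N:F)+1 := by linarith
        obtain ⟨u', hu', hltu⟩ := hPnomax h2
        obtain ⟨v', hv', hltv⟩ := hnegP h3
        apply hasDerivO_of_locally_const
        have hIoo : Set.Ioo (v'/((N:F)+1)) (u'/(N:F)) ∈ 𝓝 x := by
          apply Ioo_mem_nhds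
          · rw [div_lt_iff₀ hN10]; linarith [hltv]
          · rw [lt_div_iff₀ hN0]; linarith [hltu]
        filter_upwards [hIoo] with y hy
        have hPNy : P ((N:F)*y) := by
          apply hPdown _ hu'
          have := hy.2
          rw [lt_div_iff₀ hN0] at this
          linarith
        have hnPNy : ¬P (((N:F)+1)*y) := by
          intro hp
          apply hv'
          apply hPdown _ hp
          have := hy.1
          rw [div_lt_iff₀ hN10] at this
          linarith
        rw [hfval y N h1 hPNy hnPNy, hfval x N h1 h2 h3]
      · have hnPx : ¬ P x := by
          intro hPx
          apply hc
          have hex : ∃ m : ℕ, ¬ P ((m:F)*x) := by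
            obtain ⟨m, hm⟩ := harch.arch β hx
            rw [nsmul_eq_mul] at hm
            exact ⟨m, fun hp => absurd (hPβ hp) (not_lt.2 hm)⟩
          set N := Nat.find hex with hNdef
          have hNspec : ¬ P ((N:F)*x) := Nat.find_spec hex
          have hN0 : N ≠ 0 := by
            intro h
            rw [h] at hNspec
            simp at hNspec
            exact hNspec hP0
          have hN1 : N ≠ 1 := by
            intro h
            rw [h] at hNspec
            simp at hNspec
            exact hNspec hPx
          have hn2 : 2 ≤ N := by omega
          refine ⟨N - 1, by omega, ?_, ?_⟩
          · have := Nat.find_min hex (show N - 1 < N by omega)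
            rw [not_not] at this
            exact this
          · have hcast : ((N-1 : ℕ):F) + 1 = (N:F) := by
              have : (N - 1 : ℕ) + 1 = N := by omega
              exact_mod_cast congrArg (Nat.cast : ℕ → F) this
            rw [hcast]
            exact hNspec
        obtain ⟨v', hv', hltv⟩ := hnegP hnPx
        apply hasDerivO_of_locally_const
        have hv'0 : 0 < v' := hnegPpos hv'
        have hIoi : Set.Ioi v' ∈ 𝓝 x := (isOpen_Ioi).mem_nhds hltv
        filter_upwards [hIoi] with y (hy : v' < y)
        have hny : ¬ cond y := by
          rintro ⟨n, h1, h2, h3⟩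
          have hnc : (1:F) ≤ (n:F) := by exact_mod_cast h1
          have hy0 : 0 < y := lt_trans hv'0 hy
          have : v' ≤ (n:F)*y := by nlinarith
          exact hv' (hPdown this h2)
        rw [hfzero y hny, hfzero x hc]
  · intro η hη
    obtain ⟨m, hm⟩ := harch.arch β hη
    rw [nsmul_eq_mul] at hm
    set n := m + 1 with hn
    have hn1 : 1 ≤ n := by omega
    have hξn := hξ n hn1
    have hξp := hξpos n hn1
    have hlt := hPβ hξn.1
    have hcast : ((n:ℕ):F) = (m:F) + 1 := by rw [hn]; push_cast; ring
    refine ⟨ξ n, hξp, ?_, ?_⟩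
    · -- n ξ n < β ≤ m η < n η  so  ξ n < η
      have h2 : (n:F) * ξ n < (n:F) * η := by
        rw [hcast] at hlt ⊢
        nlinarith
      have hn0 : (0:F) < (n:F) := by rw [hcast]; positivity
      exact lt_of_mul_lt_mul_left h2 hn0.le
    · rw [hfval (ξ n) n hn1 hξn.1 hξn.2]

end Aux

/-- an ordered field satisfies the least upper bound property iff
Taylor's Theorem with Peano remainder holds in it. -/
theorem stmt_17 {F : Type*} [Field F] [LinearOrder F] [IsStrictOrderedRing F] [TopologicalSpace F] [OrderTopology F] :
    (∀ A : Set F, A.Nonempty → BddAbove A → ∃ s, IsLUB A s) ↔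
    (∀ n : ℕ, 1 ≤ n → ∀ (f : F → F) (D : ℕ → F → F) (a : F), HasNDerivAt n f D a →
      Tendsto
        (fun x => (f x - ∑ k ∈ Finset.range (n + 1),
          D k a / (Nat.factorial k : F) * (x - a) ^ k) / (x - a) ^ n)
        (𝓝[≠] a) (𝓝 0)) := by
  constructor
  · exact fun hlub => peano hlub
  · intro hT A hA hbdd
    by_contra hno
    push_neg at hno
    by_cases harch : Archimedean F
    · obtain ⟨f, h0, hd, hb⟩ := exists_bad_arch harch hA hbdd hno
      exact taylor_fails f h0 hd hb hT
    · obtain ⟨f, h0, hd, hb⟩ := exists_bad_nonarch harch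
      exact taylor_fails f h0 hd hb hT
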